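/- arXiv:2101.02059 — 8 statements merged into one kernel-verified Lean document; each statement's English description precedes it below -/
import Mathlib

section
/- Let p be a prime and α ≥ 2 an integer, and let G = ℤ/p^αℤ. For two distinct elements a ∈ O_{α,p^i} and b ∈ O_{α,p^j} (where 0 ≤ i, j ≤ α), the vertices a and b are adjacent in the group-annihilator graph Γ(G) if and only if i + j ≥ α. -/
/-- The `a`-annihilator `[a : G] = {x ∈ ℤ : xg ∈ ℤa for all g ∈ G}` of a finite abelian
group `G` viewed as a `ℤ`-module. -/
def annSet {G : Type*} [AddCommGroup G] (a : G) : Set ℤ :=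
  {x : ℤ | ∀ g : G, ∃ n : ℤ, x • g = n • a}

/-- The group-annihilator graph `Γ(G)`: two distinct vertices `a, b` are adjacent iff
`[a : G][b : G]G = {0}`. -/
def annGraph (G : Type*) [AddCommGroup G] : SimpleGraph G where
  Adj a b := a ≠ b ∧ ∀ x ∈ annSet a, ∀ y ∈ annSet b, ∀ g : G, (x * y) • g = 0
  symm := by
    constructor
    rintro a b ⟨hne, h⟩
    refine ⟨hne.symm, fun y hy x hx g => ?_⟩
    rw [mul_comm]
    exact h x hx y hy g
  loopless := by constructor; rintro a ⟨h, -⟩; exact h rfl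

/-- The `p^i`-th orbit `O_{α,p^i} = {p^i b mod p^α : b ∈ ℤ, gcd(b,p) = 1}` of `ℤ/p^αℤ`. -/
def porbit (p α i : ℕ) : Set (ZMod (p ^ α)) :=
  {x : ZMod (p ^ α) | ∃ b : ℤ, Int.gcd b p = 1 ∧ x = (((p : ℤ) ^ i * b : ℤ) : ZMod (p ^ α))}

lemma pow_mem_annSet (p α i : ℕ) (hp : p.Prime) (u : ℤ) (hu : Int.gcd u p = 1) :
    ((p : ℤ) ^ i) ∈ annSet (((p : ℤ) ^ i * u : ℤ) : ZMod (p ^ α)) := by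
  haveI : NeZero (p ^ α) := ⟨(pow_pos hp.pos α).ne'⟩
  have hcop : IsCoprime u ((p : ℤ) ^ α) :=
    (Int.isCoprime_iff_gcd_eq_one.mpr hu).pow_right
  obtain ⟨c, d, hcd⟩ := hcop
  have hpz : ((p : ZMod (p ^ α))) ^ α = 0 := by
    have := ZMod.natCast_self (p ^ α)
    push_cast at this
    exact this
  have hinv : (c : ZMod (p ^ α)) * (u : ZMod (p ^ α)) = 1 := by
    have h2 := congrArg (fun z : ℤ => (z : ZMod (p ^ α))) hcd
    push_cast at h2
    rw [hpz] at h2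
    simpa using h2
  intro g
  refine ⟨c * (g.val : ℤ), ?_⟩
  rw [zsmul_eq_mul, zsmul_eq_mul]
  push_cast
  rw [ZMod.natCast_val, ZMod.cast_id]
  ring_nf
  rw [mul_assoc, hinv, mul_one]

lemma dvd_of_mem_annSet (p α i : ℕ) (hp : p.Prime) (hi : i ≤ α) (u x : ℤ)
    (hx : x ∈ annSet (((p : ℤ) ^ i * u : ℤ) : ZMod (p ^ α))) : (p : ℤ) ^ i ∣ x := by
  haveI : NeZero (p ^ α) := ⟨(pow_pos hp.pos α).ne'⟩
  obtain ⟨n, hn⟩ := hx 1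
  rw [zsmul_eq_mul, zsmul_eq_mul, mul_one] at hn
  have h0 : ((x - n * ((p : ℤ) ^ i * u) : ℤ) : ZMod (p ^ α)) = 0 := by
    push_cast
    push_cast at hn
    rw [hn]
    ring
  have hd : ((p : ℤ) ^ α) ∣ x - n * ((p : ℤ) ^ i * u) := by
    have := (ZMod.intCast_zmod_eq_zero_iff_dvd _ _).mp h0
    push_cast at this
    exact this
  have hd2 : (p : ℤ) ^ i ∣ x - n * ((p : ℤ) ^ i * u) := (pow_dvd_pow _ hi).trans hd
  have : x = (x - n * ((p : ℤ) ^ i * u)) + n * ((p : ℤ) ^ i * u) := by ring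
  rw [this]
  exact dvd_add hd2 ⟨n * u, by ring⟩

/-- for a prime `p`, `α ≥ 2`, distinct `a ∈ O_{α,p^i}` and `b ∈ O_{α,p^j}`
(`0 ≤ i, j ≤ α`), `a` and `b` are adjacent in `Γ(ℤ/p^αℤ)` iff `i + j ≥ α`. -/
theorem annGraph_adj_iff (p α : ℕ) (hp : p.Prime) (hα : 2 ≤ α)
    (i j : ℕ) (hi : i ≤ α) (hj : j ≤ α) (a b : ZMod (p ^ α))
    (ha : a ∈ porbit p α i) (hb : b ∈ porbit p α j) (hab : a ≠ b) :
    (annGraph (ZMod (p ^ α))).Adj a b ↔ α ≤ i + j := by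
  haveI : NeZero (p ^ α) := ⟨(pow_pos hp.pos α).ne'⟩
  obtain ⟨u, hu, rfl⟩ := ha
  obtain ⟨v, hv, rfl⟩ := hb
  constructor
  · rintro ⟨-, h⟩
    have := h _ (pow_mem_annSet p α i hp u hu) _ (pow_mem_annSet p α j hp v hv) 1
    rw [zsmul_eq_mul, mul_one] at this
    have h0 : ((((p : ℤ) ^ i * (p : ℤ) ^ j) : ℤ) : ZMod (p ^ α)) = 0 := by
      push_cast at this ⊢
      exact this
    have hd := (ZMod.intCast_zmod_eq_zero_iff_dvd _ _).mp h0
    rw [← pow_add] at hd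
    have hd' : p ^ α ∣ p ^ (i + j) := by exact_mod_cast hd
    exact (Nat.pow_dvd_pow_iff_le_right hp.one_lt).mp hd'
  · intro hle
    refine ⟨hab, fun x hx y hy g => ?_⟩
    have hdx := dvd_of_mem_annSet p α i hp hi u x hx
    have hdy := dvd_of_mem_annSet p α j hp hj v y hy
    have hdxy : ((p : ℤ) ^ α) ∣ x * y := by
      calc ((p : ℤ) ^ α) ∣ (p : ℤ) ^ (i + j) := pow_dvd_pow _ hle
      _ ∣ x * y := by rw [pow_add]; exact mul_dvd_mul hdx hdy
    rw [zsmul_eq_mul]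
    have : ((x * y : ℤ) : ZMod (p ^ α)) = 0 := by
      rw [ZMod.intCast_zmod_eq_zero_iff_dvd]
      exact_mod_cast hdxy
    rw [this, zero_mul]
end

section
/- Let p be a prime, α ≥ 1 an integer, and ℓ ≥ 2 an integer, and let G = (ℤ/p^αℤ)^ℓ. Then the group-annihilator graph Γ(G) is a complete graph on p^{αℓ} vertices: every two distinct elements of G are adjacent in Γ(G). -/
lemma annSq (p α ℓ : ℕ) (hℓ : 2 ≤ ℓ)
    (a : Fin ℓ → ZMod (p ^ α)) {x : ℤ} (hx : x ∈ annSet a) :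
    ((x : ZMod (p ^ α))) ^ 2 = 0 := by
  have h01 : (⟨0, by omega⟩ : Fin ℓ) ≠ ⟨1, by omega⟩ := by simp [Fin.ext_iff]
  obtain ⟨n0, h0⟩ := hx (Pi.single ⟨0, by omega⟩ 1)
  obtain ⟨n1, h1⟩ := hx (Pi.single ⟨1, by omega⟩ 1)
  have e00 := congrFun h0 ⟨0, by omega⟩
  have e01 := congrFun h0 ⟨1, by omega⟩
  have e10 := congrFun h1 ⟨0, by omega⟩
  have e11 := congrFun h1 ⟨1, by omega⟩
  simp [Pi.single_eq_same, Pi.single_eq_of_ne, h01, h01.symm, zsmul_eq_mul] at e00 e01 e10 e11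
  rw [sq]; nth_rewrite 2 [e11]; rw [e00]
  calc (n0 : ZMod (p^α)) * a ⟨0, by omega⟩ * ((n1 : ZMod (p^α)) * a ⟨1, by omega⟩)
      = ((n0 : ZMod (p^α)) * a ⟨1, by omega⟩) * ((n1 : ZMod (p^α)) * a ⟨0, by omega⟩) := by ring
    _ = 0 := by rw [← e01, ← e10]; ring

/-- for a prime `p`, `α ≥ 1`, `ℓ ≥ 2` and `G = (ℤ/p^αℤ)^ℓ`, the
group-annihilator graph `Γ(G)` is a complete graph on `p^(αℓ)` vertices. -/
theorem annGraph_pi_complete (p α ℓ : ℕ) (hp : p.Prime) (hα : 1 ≤ α) (hℓ : 2 ≤ ℓ) :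
    Nat.card (Fin ℓ → ZMod (p ^ α)) = p ^ (α * ℓ) ∧
    ∀ a b : Fin ℓ → ZMod (p ^ α), a ≠ b → (annGraph (Fin ℓ → ZMod (p ^ α))).Adj a b := by
  haveI : NeZero (p ^ α) := ⟨pow_ne_zero _ hp.pos.ne'⟩
  constructor
  · rw [Nat.card_fun, Nat.card_zmod, Nat.card_eq_fintype_card, Fintype.card_fin, ← pow_mul]
  · intro a b hab
    refine ⟨hab, fun x hx y hy g => ?_⟩
    have hx2 : ((p : ℤ) ^ α) ∣ x ^ 2 := by
      have := annSq p α ℓ hℓ a hx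
      rwa [← Int.cast_pow, ZMod.intCast_zmod_eq_zero_iff_dvd, Nat.cast_pow] at this
    have hy2 : ((p : ℤ) ^ α) ∣ y ^ 2 := by
      have := annSq p α ℓ hℓ b hy
      rwa [← Int.cast_pow, ZMod.intCast_zmod_eq_zero_iff_dvd, Nat.cast_pow] at this
    have hxy : ((p : ℤ) ^ α) ∣ x * y := by
      rw [← Int.pow_dvd_pow_iff (two_ne_zero)]
      calc ((p:ℤ) ^ α) ^ 2 = (p:ℤ)^α * (p:ℤ)^α := sq _
        _ ∣ x ^ 2 * y ^ 2 := mul_dvd_mul hx2 hy2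
        _ = (x * y) ^ 2 := (mul_pow x y 2).symm
    have hc : ((x * y : ℤ) : ZMod (p ^ α)) = 0 := by
      rw [ZMod.intCast_zmod_eq_zero_iff_dvd, Nat.cast_pow]; exact hxy
    funext j
    show (x * y) • g j = 0
    rw [zsmul_eq_mul, hc, zero_mul]
end

section
/- Let p be a prime and ℓ ≥ 2 an integer, and let G = (ℤ/pℤ)^ℓ. The automorphism group of the group-annihilator graph Γ(G) acts transitively on the vertex set G: for any two vertices u, v ∈ G there is a graph automorphism φ of Γ(G) with φ(u) = v. -/
/-- In `(ℤ/pℤ)^ℓ` with `ℓ ≥ 2`, every element of every annihilator is divisible by `p`. -/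
theorem annSet_cast_eq_zero (p ℓ : ℕ) (hp : p.Prime) (hℓ : 2 ≤ ℓ) (a : Fin ℓ → ZMod p)
    (x : ℤ) (hx : x ∈ annSet a) : (x : ZMod p) = 0 := by
  haveI : Fact p.Prime := ⟨hp⟩
  by_cases ha : a = 0
  · subst ha
    obtain ⟨n, hn⟩ := hx (fun _ => 1)
    have := congrFun hn ⟨0, by omega⟩
    simpa using this
  · obtain ⟨i, hi⟩ : ∃ i, a i ≠ 0 := by
      by_contra h; push_neg at h; exact ha (funext h)
    obtain ⟨j, hj⟩ : ∃ j : Fin ℓ, j ≠ i := by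
      refine ⟨⟨if i.val = 0 then 1 else 0, by split <;> omega⟩, ?_⟩
      intro h; apply_fun Fin.val at h; simp at h; split at h <;> omega
    obtain ⟨n, hn⟩ := hx (Pi.single j 1)
    have h1 := congrFun hn i
    have h2 := congrFun hn j
    simp [Pi.single_apply, hj, hj.symm] at h1 h2
    have hn0 : (n : ZMod p) = 0 := h1.resolve_right hi
    rw [h2, hn0, zero_mul]

/-- For `ℓ ≥ 2`, `Γ((ℤ/pℤ)^ℓ)` is complete. -/
theorem annGraph_adj_iff_s7 (p ℓ : ℕ) (hp : p.Prime) (hℓ : 2 ≤ ℓ)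
    (a b : Fin ℓ → ZMod p) : (annGraph (Fin ℓ → ZMod p)).Adj a b ↔ a ≠ b := by
  constructor
  · exact fun h => h.1
  · intro hne
    refine ⟨hne, fun x hx y hy g => ?_⟩
    funext k
    have hx0 := annSet_cast_eq_zero p ℓ hp hℓ a x hx
    show (x * y) • g k = 0
    rw [zsmul_eq_mul]
    push_cast
    rw [hx0, zero_mul, zero_mul]

/-- for a prime `p` and `ℓ ≥ 2`, the automorphism group of
`Γ((ℤ/pℤ)^ℓ)` acts transitively on the vertices. -/
theorem annGraph_aut_transitive (p ℓ : ℕ) (hp : p.Prime) (hℓ : 2 ≤ ℓ)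
    (u v : Fin ℓ → ZMod p) :
    ∃ φ : annGraph (Fin ℓ → ZMod p) ≃g annGraph (Fin ℓ → ZMod p), φ u = v := by
  refine ⟨⟨Equiv.addRight (v - u), ?_⟩, ?_⟩
  · intro a b
    simp only [Equiv.coe_addRight, annGraph_adj_iff_s7 p ℓ hp hℓ, ne_eq,
      add_left_inj]
  · show u + (v - u) = v
    abel
end

section
/- Let p be a prime and α < β < γ positive integers, and let G = ℤ/p^αℤ × ℤ/p^βℤ × ℤ/p^γℤ viewed as a ℤ-module. Then [(0, 0, 0) : G] = p^γ ℤ; for every c ∈ O_{γ,p^i} with 0 ≤ i ≤ β−1, [(0, 0, c) : G] = p^β ℤ; and for every c ∈ O_{γ,p^i} with β ≤ i ≤ γ−1, [(0, 0, c) : G] = p^i ℤ. -/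
lemma mem_annSet_triple {A B C : Type*} [AddCommGroup A] [AddCommGroup B] [AddCommGroup C]
    (c : C) (x : ℤ) :
    x ∈ annSet ((0, 0, c) : A × B × C) ↔
      (∀ g : A, x • g = 0) ∧ (∀ g : B, x • g = 0) ∧ (∀ g : C, ∃ n : ℤ, x • g = n • c) := by
  constructor
  · intro h
    refine ⟨fun g => ?_, fun g => ?_, fun g => ?_⟩
    · obtain ⟨n, hn⟩ := h (g, 0, 0)
      simpa using congrArg Prod.fst hn
    · obtain ⟨n, hn⟩ := h (0, g, 0)
      simpa using congrArg (fun z => z.2.1) hn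
    · obtain ⟨n, hn⟩ := h (0, 0, g)
      exact ⟨n, by simpa using congrArg (fun z => z.2.2) hn⟩
  · rintro ⟨h1, h2, h3⟩ ⟨g1, g2, g3⟩
    obtain ⟨n, hn⟩ := h3 g3
    exact ⟨n, by simp [Prod.smul_def, Prod.ext_iff, h1 g1, h2 g2, hn]⟩

lemma allzero (m : ℕ) [NeZero m] (x : ℤ) :
    (∀ g : ZMod m, x • g = 0) ↔ (m : ℤ) ∣ x := by
  constructor
  · intro h
    have := h 1
    rw [zsmul_eq_mul, mul_one] at this
    exact (ZMod.intCast_zmod_eq_zero_iff_dvd x m).mp this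
  · rintro ⟨k, rfl⟩ g
    rw [zsmul_eq_mul]
    push_cast
    simp [ZMod.natCast_self]

lemma key (p γ i : ℕ) [NeZero (p ^ γ)] (hi : i ≤ γ) (b : ℤ) (hb : Int.gcd b p = 1) (x : ℤ) :
    (∀ g : ZMod (p ^ γ), ∃ n : ℤ, x • g = n • (((p : ℤ) ^ i * b : ℤ) : ZMod (p ^ γ))) ↔
      (p : ℤ) ^ i ∣ x := by
  constructor
  · intro h
    obtain ⟨n, hn⟩ := h 1
    rw [zsmul_eq_mul, mul_one, zsmul_eq_mul, ← Int.cast_mul] at hn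
    have hd : ((p ^ γ : ℕ) : ℤ) ∣ x - n * ((p : ℤ) ^ i * b) :=
      Int.ModEq.dvd ((ZMod.intCast_eq_intCast_iff _ _ _).mp hn).symm
    have hpi : (p : ℤ) ^ i ∣ x - n * ((p : ℤ) ^ i * b) := by
      refine dvd_trans ?_ hd
      push_cast
      exact pow_dvd_pow _ hi
    have : x = (x - n * ((p : ℤ) ^ i * b)) + (p : ℤ) ^ i * (n * b) := by ring
    rw [this]
    exact dvd_add hpi ⟨n * b, by ring⟩
  · rintro ⟨t, rfl⟩ g
    have hco : IsCoprime b ((p : ℤ) ^ γ) :=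
      (Int.isCoprime_iff_gcd_eq_one.mpr hb).pow_right
    obtain ⟨u, v, huv⟩ := hco
    refine ⟨t * (g.val : ℤ) * u, ?_⟩
    have hg : ((g.val : ℤ) : ZMod (p ^ γ)) = g := by
      push_cast
      simp [ZMod.natCast_val, ZMod.cast_id]
    have lhs : ((p : ℤ) ^ i * t) • g = (((p : ℤ) ^ i * t * (g.val : ℤ) : ℤ) : ZMod (p ^ γ)) := by
      conv_lhs => rw [← hg]
      rw [zsmul_eq_mul, ← Int.cast_mul]
    have rhs : (t * (g.val : ℤ) * u) • (((p : ℤ) ^ i * b : ℤ) : ZMod (p ^ γ)) =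
        (((t * (g.val : ℤ) * u) * ((p : ℤ) ^ i * b) : ℤ) : ZMod (p ^ γ)) := by
      rw [zsmul_eq_mul, ← Int.cast_mul]
    rw [lhs, rhs, ZMod.intCast_eq_intCast_iff]
    refine Int.ModEq.symm (Int.modEq_iff_dvd.mpr ⟨(p : ℤ) ^ i * t * (g.val : ℤ) * v, ?_⟩)
    push_cast
    linear_combination (-((p : ℤ) ^ i * t * (g.val : ℤ))) * huv

/-- for a prime `p`, positive integers `α < β < γ` and
`G = ℤ/p^αℤ × ℤ/p^βℤ × ℤ/p^γℤ`: `[(0,0,0) : G] = p^γℤ`; `[(0,0,c) : G] = p^βℤ` for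
`c ∈ O_{γ,p^i}` with `0 ≤ i ≤ β-1`; and `[(0,0,c) : G] = p^iℤ` for `c ∈ O_{γ,p^i}` with
`β ≤ i ≤ γ-1`. -/
theorem annSet_triple_zero_zero (p α β γ : ℕ) (hp : p.Prime) (hα : 0 < α)
    (hαβ : α < β) (hβγ : β < γ) :
    annSet ((0, 0, 0) : ZMod (p ^ α) × ZMod (p ^ β) × ZMod (p ^ γ)) =
      {x : ℤ | (p : ℤ) ^ γ ∣ x} ∧
    (∀ i, i ≤ β - 1 → ∀ c ∈ porbit p γ i,
      annSet ((0, 0, c) : ZMod (p ^ α) × ZMod (p ^ β) × ZMod (p ^ γ)) =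
        {x : ℤ | (p : ℤ) ^ β ∣ x}) ∧
    (∀ i, β ≤ i → i ≤ γ - 1 → ∀ c ∈ porbit p γ i,
      annSet ((0, 0, c) : ZMod (p ^ α) × ZMod (p ^ β) × ZMod (p ^ γ)) =
        {x : ℤ | (p : ℤ) ^ i ∣ x}) := by
  haveI : NeZero (p ^ α) := ⟨pow_ne_zero _ hp.ne_zero⟩
  haveI : NeZero (p ^ β) := ⟨pow_ne_zero _ hp.ne_zero⟩
  haveI : NeZero (p ^ γ) := ⟨pow_ne_zero _ hp.ne_zero⟩
  have hmem : ∀ (i : ℕ), i ≤ γ → ∀ c ∈ porbit p γ i, ∀ x : ℤ,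
      x ∈ annSet ((0, 0, c) : ZMod (p ^ α) × ZMod (p ^ β) × ZMod (p ^ γ)) ↔
      ((p : ℤ) ^ α ∣ x ∧ (p : ℤ) ^ β ∣ x ∧ (p : ℤ) ^ i ∣ x) := by
    rintro i hi c ⟨b, hb, rfl⟩ x
    rw [mem_annSet_triple, allzero, allzero, key p γ i hi b hb]
    push_cast
    tauto
  have hdvd : ∀ a b : ℕ, a ≤ b → ∀ x : ℤ, (p : ℤ) ^ b ∣ x → (p : ℤ) ^ a ∣ x :=
    fun a b hab x h => dvd_trans (pow_dvd_pow _ hab) h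
  refine ⟨?_, ?_, ?_⟩
  · ext x
    simp only [Set.mem_setOf_eq, mem_annSet_triple, allzero, smul_zero, exists_const]
    push_cast
    constructor
    · exact fun h => h.2.2
    · intro h
      exact ⟨hdvd _ _ (le_of_lt (hαβ.trans hβγ)) x h, hdvd _ _ (le_of_lt hβγ) x h, h⟩
  · intro i hi c hc
    ext x
    rw [hmem i (by omega) c hc x]
    simp only [Set.mem_setOf_eq]
    constructor
    · exact fun h => h.2.1
    · intro h
      exact ⟨hdvd _ _ (le_of_lt hαβ) x h, h, hdvd _ _ (by omega) x h⟩
  · intro i hβi hi c hc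
    ext x
    rw [hmem i (by omega) c hc x]
    simp only [Set.mem_setOf_eq]
    constructor
    · exact fun h => h.2.2
    · intro h
      exact ⟨hdvd _ _ (by omega) x h, hdvd _ _ hβi x h, h⟩
end

section
/- Let p be a prime and α < β < γ positive integers, and let G = ℤ/p^αℤ × ℤ/p^βℤ × ℤ/p^γℤ viewed as a ℤ-module. Fix b ∈ O_{β,p^j} with 0 ≤ j ≤ β−1. Then [(0, b, 0) : G] = p^γ ℤ; for c ∈ O_{γ,p^i} with 0 ≤ i ≤ j, [(0, b, c) : G] = p^β ℤ; for c ∈ O_{γ,p^i} with j+1 ≤ i ≤ γ−β+j, [(0, b, c) : G] = p^{i+β−j} ℤ; and for c ∈ O_{γ,p^i} with γ−β+j+1 ≤ i ≤ γ−1, [(0, b, c) : G] = p^γ ℤ. -/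
private lemma zsmul_cast' (m : ℕ) (x a : ℤ) :
    x • ((a : ℤ) : ZMod m) = ((x * a : ℤ) : ZMod m) := by
  rw [zsmul_eq_mul]; push_cast; ring

private lemma smul_zmod_eq_zero {m : ℕ} [NeZero m] {x : ℤ} (h : (m:ℤ) ∣ x) (g : ZMod m) :
    x • g = 0 := by
  rw [zsmul_eq_mul, (ZMod.intCast_zmod_eq_zero_iff_dvd x m).mpr h, zero_mul]

private lemma exists_inv_mod {v : ℤ} {p : ℕ} (m : ℕ) (hv : Int.gcd v p = 1) :
    ∃ w : ℤ, ((p:ℤ))^m ∣ v * w - 1 := by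
  obtain ⟨a, b, hab⟩ := (Int.isCoprime_iff_gcd_eq_one.mpr hv).pow_right (n := m)
  exact ⟨a, ⟨-b, by linear_combination hab⟩⟩

private lemma pow_sub_dvd' {p : ℕ} (hp : p.Prime) {m l : ℕ} (hlm : l ≤ m) {n u : ℤ}
    (hu : Int.gcd u p = 1) (h : (p:ℤ)^m ∣ n * ((p:ℤ)^l * u)) : (p:ℤ)^(m-l) ∣ n := by
  have hc : IsCoprime ((p:ℤ)^m) u :=
    ((Int.isCoprime_iff_gcd_eq_one.mpr hu).pow_right (n := m)).symm
  have h2 : (p:ℤ)^m ∣ n * (p:ℤ)^l := hc.dvd_of_dvd_mul_right (by rwa [← mul_assoc] at h)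
  have h3 : (p:ℤ)^(m-l) * (p:ℤ)^l ∣ n * (p:ℤ)^l := by
    rwa [← pow_add, Nat.sub_add_cancel hlm]
  exact (mul_dvd_mul_iff_right (pow_ne_zero l (by exact_mod_cast hp.ne_zero))).mp h3

private lemma mem_annSet_iff {A B C : Type*} [AddCommGroup A] [AddCommGroup B] [AddCommGroup C]
    (b : B) (c : C) (x : ℤ) :
    x ∈ annSet ((0, b, c) : A × B × C) ↔
      ∀ (g1 : A) (g2 : B) (g3 : C), ∃ n : ℤ, x • g1 = 0 ∧ x • g2 = n • b ∧ x • g3 = n • c := by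
  constructor
  · intro h g1 g2 g3
    obtain ⟨n, hn⟩ := h (g1, g2, g3)
    refine ⟨n, ?_⟩
    simpa [Prod.ext_iff, Prod.smul_def] using hn
  · intro h g
    obtain ⟨n, h1, h2, h3⟩ := h g.1 g.2.1 g.2.2
    exact ⟨n, by simp [Prod.ext_iff, Prod.smul_def, h1, h2, h3]⟩

private lemma annSet_general (p α β γ : ℕ) (hp : p.Prime) (hαβ : α < β) (hβγ : β < γ)
    (j i : ℕ) (hj : j + 1 ≤ β) (hi : i ≤ γ) (u v : ℤ)
    (hu : Int.gcd u p = 1) (hv : Int.gcd v p = 1) :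
    annSet ((0, (((p:ℤ)^j * u : ℤ) : ZMod (p^β)), (((p:ℤ)^i * v : ℤ) : ZMod (p^γ))) :
        ZMod (p ^ α) × ZMod (p ^ β) × ZMod (p ^ γ)) =
      {x : ℤ | (p:ℤ) ^ (min γ (β + (i - j))) ∣ x} := by
  have hpne : p ≠ 0 := hp.ne_zero
  haveI : NeZero (p^α) := ⟨pow_ne_zero _ hpne⟩
  haveI : NeZero (p^β) := ⟨pow_ne_zero _ hpne⟩
  haveI : NeZero (p^γ) := ⟨pow_ne_zero _ hpne⟩
  have hcα : ((p^α : ℕ) : ℤ) = (p:ℤ)^α := by push_cast; ring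
  have hcβ : ((p^β : ℕ) : ℤ) = (p:ℤ)^β := by push_cast; ring
  have hcγ : ((p^γ : ℕ) : ℤ) = (p:ℤ)^γ := by push_cast; ring
  ext x
  rw [Set.mem_setOf_eq, mem_annSet_iff]
  constructor
  · intro hx
    obtain ⟨n, h1, h2, h3⟩ := hx 0 1 0
    obtain ⟨m, k1, k2, k3⟩ := hx 0 0 1
    -- h3 : x • 0 = n • c  gives p^(γ-i) ∣ n
    rw [smul_zero] at h3
    rw [zsmul_cast'] at h3
    have hn : (p:ℤ)^(γ-i) ∣ n := by
      refine pow_sub_dvd' hp hi hv ?_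
      rw [← hcγ, ← ZMod.intCast_zmod_eq_zero_iff_dvd]
      exact h3.symm
    -- h2 : x • 1 = n • b
    rw [show (1 : ZMod (p^β)) = ((1 : ℤ) : ZMod (p^β)) by norm_cast] at h2
    rw [zsmul_cast', zsmul_cast', mul_one] at h2
    have hd2 : (p:ℤ)^β ∣ n * ((p:ℤ)^j * u) - x := by
      rw [← hcβ]
      exact Int.ModEq.dvd ((ZMod.intCast_eq_intCast_iff _ _ _).mp h2)
    have he1 : (p:ℤ)^(min β (γ - i + j)) ∣ x := by
      have hnb : (p:ℤ)^(γ - i + j) ∣ n * ((p:ℤ)^j * u) := by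
        have : (p:ℤ)^(γ-i) * (p:ℤ)^j ∣ n * (p:ℤ)^j := mul_dvd_mul hn dvd_rfl
        rw [← pow_add] at this
        calc (p:ℤ)^(γ-i+j) ∣ n * (p:ℤ)^j := this
          _ ∣ n * ((p:ℤ)^j * u) := by rw [← mul_assoc]; exact dvd_mul_right _ _
      have h5 : (p:ℤ)^(min β (γ - i + j)) ∣ n * ((p:ℤ)^j * u) :=
        (pow_dvd_pow _ (min_le_right _ _)).trans hnb
      have h6 : (p:ℤ)^(min β (γ - i + j)) ∣ n * ((p:ℤ)^j * u) - x :=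
        (pow_dvd_pow _ (min_le_left _ _)).trans hd2
      have := dvd_sub h5 h6
      simpa using this
    -- k2 : x • 0 = m • b  gives p^(β-j) ∣ m
    rw [smul_zero, zsmul_cast'] at k2
    have hm : (p:ℤ)^(β-j) ∣ m := by
      refine pow_sub_dvd' hp (by omega) hu ?_
      rw [← hcβ, ← ZMod.intCast_zmod_eq_zero_iff_dvd]
      exact k2.symm
    rw [show (1 : ZMod (p^γ)) = ((1 : ℤ) : ZMod (p^γ)) by norm_cast] at k3
    rw [zsmul_cast', zsmul_cast', mul_one] at k3
    have kd3 : (p:ℤ)^γ ∣ m * ((p:ℤ)^i * v) - x := by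
      rw [← hcγ]
      exact Int.ModEq.dvd ((ZMod.intCast_eq_intCast_iff _ _ _).mp k3)
    have he2 : (p:ℤ)^(min γ (β - j + i)) ∣ x := by
      have hmc : (p:ℤ)^(β - j + i) ∣ m * ((p:ℤ)^i * v) := by
        have : (p:ℤ)^(β-j) * (p:ℤ)^i ∣ m * (p:ℤ)^i := mul_dvd_mul hm dvd_rfl
        rw [← pow_add] at this
        calc (p:ℤ)^(β-j+i) ∣ m * (p:ℤ)^i := this
          _ ∣ m * ((p:ℤ)^i * v) := by rw [← mul_assoc]; exact dvd_mul_right _ _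
      have h5 : (p:ℤ)^(min γ (β - j + i)) ∣ m * ((p:ℤ)^i * v) :=
        (pow_dvd_pow _ (min_le_right _ _)).trans hmc
      have h6 : (p:ℤ)^(min γ (β - j + i)) ∣ m * ((p:ℤ)^i * v) - x :=
        (pow_dvd_pow _ (min_le_left _ _)).trans kd3
      have := dvd_sub h5 h6
      simpa using this
    have hEor : min γ (β + (i - j)) = min β (γ - i + j) ∨
        min γ (β + (i - j)) = min γ (β - j + i) := by omega
    rcases hEor with hE | hE
    · rw [hE]; exact he1
    · rw [hE]; exact he2
  · intro hx g1 g2 g3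
    obtain ⟨t, ht⟩ := hx
    have hxα : x • g1 = 0 := by
      refine smul_zmod_eq_zero ?_ g1
      rw [hcα, ht]
      exact Dvd.dvd.mul_right (pow_dvd_pow _ (by omega)) t
    have hxβ : ∀ g : ZMod (p^β), x • g = 0 := by
      intro g
      refine smul_zmod_eq_zero ?_ g
      rw [hcβ, ht]
      exact Dvd.dvd.mul_right (pow_dvd_pow _ (by omega)) t
    by_cases hcase : β + (i - j) ≤ γ
    · obtain ⟨w, hw⟩ := exists_inv_mod (p := p) γ hv
      obtain ⟨G3, hG3⟩ : ∃ G3 : ℤ, ((G3:ℤ) : ZMod (p^γ)) = g3 :=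
        ⟨ZMod.cast g3, ZMod.intCast_zmod_cast g3⟩
      refine ⟨(p:ℤ)^(β - min i j) * t * G3 * w, hxα, ?_, ?_⟩
      · rw [hxβ g2, zsmul_cast']
        symm
        rw [ZMod.intCast_zmod_eq_zero_iff_dvd, hcβ]
        have key : (p:ℤ)^(β - min i j) * t * G3 * w * ((p:ℤ)^j * u)
            = (p:ℤ)^(β - min i j + j) * (t * G3 * w * u) := by rw [pow_add]; ring
        rw [key]
        exact Dvd.dvd.mul_right (pow_dvd_pow _ (show β ≤ β - min i j + j by omega)) _
      · rw [← hG3, zsmul_cast', zsmul_cast']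
        rw [ZMod.intCast_eq_intCast_iff, Int.modEq_iff_dvd, hcγ]
        have hE : min γ (β + (i - j)) = β - min i j + i := by omega
        have key : (p:ℤ)^(β - min i j) * t * G3 * w * ((p:ℤ)^i * v) - x * G3
            = (t * G3 * (p:ℤ)^(β - min i j + i)) * (v * w - 1) := by
          rw [ht, hE, pow_add]; ring
        rw [key]
        exact hw.mul_left _
    · refine ⟨0, hxα, ?_, ?_⟩
      · rw [hxβ g2, zero_smul]
      · rw [zero_smul]
        refine smul_zmod_eq_zero ?_ g3
        rw [hcγ, ht]
        exact Dvd.dvd.mul_right (pow_dvd_pow _ (by omega)) t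

/-- for a prime `p`, positive integers `α < β < γ`,
`G = ℤ/p^αℤ × ℤ/p^βℤ × ℤ/p^γℤ` and `b ∈ O_{β,p^j}` with `0 ≤ j ≤ β-1`:
`[(0,b,0) : G] = p^γℤ`; `[(0,b,c) : G] = p^βℤ` for `c ∈ O_{γ,p^i}` with `0 ≤ i ≤ j`;
`[(0,b,c) : G] = p^(i+β-j)ℤ` for `c ∈ O_{γ,p^i}` with `j+1 ≤ i ≤ γ-β+j`; and
`[(0,b,c) : G] = p^γℤ` for `c ∈ O_{γ,p^i}` with `γ-β+j+1 ≤ i ≤ γ-1`. -/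
theorem annSet_triple_zero_b (p α β γ : ℕ) (hp : p.Prime) (hα : 0 < α)
    (hαβ : α < β) (hβγ : β < γ) (j : ℕ) (hj : j ≤ β - 1)
    (b : ZMod (p ^ β)) (hb : b ∈ porbit p β j) :
    annSet ((0, b, 0) : ZMod (p ^ α) × ZMod (p ^ β) × ZMod (p ^ γ)) =
      {x : ℤ | (p : ℤ) ^ γ ∣ x} ∧
    (∀ i, i ≤ j → ∀ c ∈ porbit p γ i,
      annSet ((0, b, c) : ZMod (p ^ α) × ZMod (p ^ β) × ZMod (p ^ γ)) =
        {x : ℤ | (p : ℤ) ^ β ∣ x}) ∧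
    (∀ i, j + 1 ≤ i → i ≤ γ - β + j → ∀ c ∈ porbit p γ i,
      annSet ((0, b, c) : ZMod (p ^ α) × ZMod (p ^ β) × ZMod (p ^ γ)) =
        {x : ℤ | (p : ℤ) ^ (i + β - j) ∣ x}) ∧
    (∀ i, γ - β + j + 1 ≤ i → i ≤ γ - 1 → ∀ c ∈ porbit p γ i,
      annSet ((0, b, c) : ZMod (p ^ α) × ZMod (p ^ β) × ZMod (p ^ γ)) =
        {x : ℤ | (p : ℤ) ^ γ ∣ x}) := by
  obtain ⟨u, hu, hbe⟩ := hb
  have hpne : p ≠ 0 := hp.ne_zero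
  haveI : NeZero (p^α) := ⟨pow_ne_zero _ hpne⟩
  haveI : NeZero (p^β) := ⟨pow_ne_zero _ hpne⟩
  haveI : NeZero (p^γ) := ⟨pow_ne_zero _ hpne⟩
  have hcγ : ((p^γ : ℕ) : ℤ) = (p:ℤ)^γ := by push_cast; ring
  refine ⟨?_, ?_, ?_, ?_⟩
  · ext x
    rw [Set.mem_setOf_eq, mem_annSet_iff]
    constructor
    · intro hx
      obtain ⟨n, h1, h2, h3⟩ := hx 0 0 1
      rw [smul_zero, show (1 : ZMod (p^γ)) = ((1 : ℤ) : ZMod (p^γ)) by norm_cast,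
        zsmul_cast', mul_one] at h3
      have := (ZMod.intCast_zmod_eq_zero_iff_dvd x (p^γ)).mp h3
      rwa [hcγ] at this
    · intro hx g1 g2 g3
      refine ⟨0, ?_, ?_, ?_⟩
      · refine smul_zmod_eq_zero ?_ g1
        rw [show ((p^α : ℕ) : ℤ) = (p:ℤ)^α by push_cast; ring]
        exact (pow_dvd_pow _ (by omega)).trans hx
      · rw [zero_smul]
        refine smul_zmod_eq_zero ?_ g2
        rw [show ((p^β : ℕ) : ℤ) = (p:ℤ)^β by push_cast; ring]
        exact (pow_dvd_pow _ (by omega)).trans hx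
      · rw [zero_smul]
        refine smul_zmod_eq_zero ?_ g3
        rw [hcγ]
        exact hx
  · intro i hij c hc
    obtain ⟨v, hv, hce⟩ := hc
    rw [hbe, hce,
      annSet_general p α β γ hp hαβ hβγ j i (by omega) (by omega) u v hu hv,
      show min γ (β + (i - j)) = β by omega]
  · intro i hji hiγ c hc
    obtain ⟨v, hv, hce⟩ := hc
    rw [hbe, hce,
      annSet_general p α β γ hp hαβ hβγ j i (by omega) (by omega) u v hu hv,
      show min γ (β + (i - j)) = i + β - j by omega]
  · intro i hγi hiγ c hc
    obtain ⟨v, hv, hce⟩ := hc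
    rw [hbe, hce,
      annSet_general p α β γ hp hαβ hβγ j i (by omega) (by omega) u v hu hv,
      show min γ (β + (i - j)) = γ by omega]
end

section
/- Let p be a prime and α < β < γ positive integers, and let G = ℤ/p^αℤ × ℤ/p^βℤ × ℤ/p^γℤ viewed as a ℤ-module. Fix a ∈ O_{α,p^k} with 0 ≤ k ≤ α−1. Then [(a, 0, 0) : G] = p^γ ℤ; for c ∈ O_{γ,p^i} with 0 ≤ i ≤ β−α+k, [(a, 0, c) : G] = p^β ℤ; for c ∈ O_{γ,p^i} with β−α+k+1 ≤ i ≤ γ−α+k−1, [(a, 0, c) : G] = p^{i+α−k} ℤ; and for c ∈ O_{γ,p^i} with γ−α+k ≤ i ≤ γ−1, [(a, 0, c) : G] = p^γ ℤ. -/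
lemma key2' (p : ℕ) (hp : p.Prime) (s₁ t₁ s₂ t₂ : ℕ) (ht₂ : t₂ ≤ s₂) (b d : ℤ)
    (hb : IsCoprime b (p:ℤ)) (hd : IsCoprime d (p:ℤ)) (x : ℤ) :
    (∃ n : ℤ, (p:ℤ)^s₁ ∣ x - n * ((p:ℤ)^t₁ * b) ∧ (p:ℤ)^s₂ ∣ n * ((p:ℤ)^t₂ * d)) ↔
      (p:ℤ)^(min (s₂ - t₂ + t₁) s₁) ∣ x := by
  have hp0 : (p:ℤ) ≠ 0 := by exact_mod_cast hp.ne_zero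
  have hsplit : (p:ℤ)^(s₂-t₂) * (p:ℤ)^t₂ = (p:ℤ)^s₂ := by rw [← pow_add]; congr 1; omega
  constructor
  · rintro ⟨n, h1, h2⟩
    have h2' : (p:ℤ)^s₂ ∣ n * (p:ℤ)^t₂ := by
      refine (IsCoprime.pow_left hd.symm).dvd_of_dvd_mul_right ?_
      rw [mul_assoc]; exact h2
    obtain ⟨m, hm⟩ := h2'
    have h3 : n = (p:ℤ)^(s₂ - t₂) * m := by
      apply mul_right_cancel₀ (pow_ne_zero t₂ hp0)
      rw [hm, ← hsplit]; ring
    have h4 : (p:ℤ)^(s₂ - t₂ + t₁) ∣ n * ((p:ℤ)^t₁ * b) :=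
      ⟨m * b, by rw [h3, pow_add]; ring⟩
    have h5 : (p:ℤ)^(min (s₂ - t₂ + t₁) s₁) ∣ x - n * ((p:ℤ)^t₁ * b) :=
      (pow_dvd_pow _ (min_le_right _ _)).trans h1
    have h6 : (p:ℤ)^(min (s₂ - t₂ + t₁) s₁) ∣ n * ((p:ℤ)^t₁ * b) :=
      (pow_dvd_pow _ (min_le_left _ _)).trans h4
    have := dvd_add h5 h6
    rwa [sub_add_cancel] at this
  · intro hx
    rcases le_total s₁ (s₂ - t₂ + t₁) with h | h
    · rw [min_eq_right h] at hx
      obtain ⟨y, hy⟩ := hx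
      refine ⟨(p:ℤ)^s₁ * (p:ℤ)^s₂, ⟨y - (p:ℤ)^s₂ * ((p:ℤ)^t₁ * b), by rw [hy]; ring⟩,
        ⟨(p:ℤ)^s₁ * ((p:ℤ)^t₂ * d), by ring⟩⟩
    · rw [min_eq_left h] at hx
      obtain ⟨y, hy⟩ := hx
      obtain ⟨u, v, huv⟩ := hb.pow_right (n := s₁)
      refine ⟨(p:ℤ)^(s₂ - t₂) * y * u, ⟨(p:ℤ)^(s₂-t₂) * (p:ℤ)^t₁ * y * v, ?_⟩,
        ⟨y * u * d, ?_⟩⟩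
      · rw [hy, pow_add]
        linear_combination ((p:ℤ)^(s₂-t₂) * (p:ℤ)^t₁ * y) * huv.symm
      · linear_combination y * u * d * hsplit

lemma zmod_mul_eq_iff (M : ℕ) (A x : ℤ) (n : ℤ) :
    ((n : ZMod M) * ((A : ℤ) : ZMod M) = (x : ZMod M)) ↔ (M:ℤ) ∣ x - n * A := by
  rw [show (n : ZMod M) * ((A : ℤ) : ZMod M) = ((n * A : ℤ) : ZMod M) by push_cast; ring,
    ZMod.intCast_eq_intCast_iff, Int.modEq_iff_dvd]

lemma key2 (p : ℕ) (hp : p.Prime) (s₁ t₁ s₂ t₂ : ℕ) (ht₂ : t₂ ≤ s₂) (b d : ℤ)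
    (hb : IsCoprime b (p:ℤ)) (hd : IsCoprime d (p:ℤ)) (x : ℤ) :
    (∃ n : ℤ, (n : ZMod (p^s₁)) * (((p:ℤ)^t₁ * b : ℤ) : ZMod (p^s₁)) = (x : ZMod (p^s₁)) ∧
      (n : ZMod (p^s₂)) * (((p:ℤ)^t₂ * d : ℤ) : ZMod (p^s₂)) = 0) ↔
      (p:ℤ)^(min (s₂ - t₂ + t₁) s₁) ∣ x := by
  rw [← key2' p hp s₁ t₁ s₂ t₂ ht₂ b d hb hd x]
  apply exists_congr; intro n
  rw [zmod_mul_eq_iff, show (0 : ZMod (p^s₂)) = (((0:ℤ)) : ZMod (p^s₂)) from (by norm_cast),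
    zmod_mul_eq_iff, zero_sub, dvd_neg]
  push_cast
  rfl

lemma mem_annSet_triple_iff (M₁ M₂ M₃ : ℕ) (a : ZMod M₁) (c : ZMod M₃) (x : ℤ) :
    x ∈ annSet ((a, 0, c) : ZMod M₁ × ZMod M₂ × ZMod M₃) ↔
      (∃ n : ℤ, (n : ZMod M₁) * a = (x : ZMod M₁) ∧ (n : ZMod M₃) * c = 0) ∧
      ((x : ZMod M₂) = 0) ∧
      (∃ n : ℤ, (n : ZMod M₁) * a = 0 ∧ (n : ZMod M₃) * c = (x : ZMod M₃)) := by
  constructor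
  · intro h
    refine ⟨?_, ?_, ?_⟩
    · obtain ⟨n, hn⟩ := h (1, 0, 0)
      simp only [Prod.smul_mk, Prod.mk.injEq, smul_zero, zsmul_eq_mul, mul_one] at hn
      exact ⟨n, hn.1.symm, hn.2.2.symm⟩
    · obtain ⟨n, hn⟩ := h (0, 1, 0)
      simp only [Prod.smul_mk, Prod.mk.injEq, smul_zero, zsmul_eq_mul, mul_one] at hn
      exact hn.2.1
    · obtain ⟨n, hn⟩ := h (0, 0, 1)
      simp only [Prod.smul_mk, Prod.mk.injEq, smul_zero, zsmul_eq_mul, mul_one] at hn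
      exact ⟨n, hn.1.symm, hn.2.2.symm⟩
  · rintro ⟨⟨n₁, h1a, h1c⟩, h2, ⟨n₃, h3a, h3c⟩⟩ ⟨g₁, g₂, g₃⟩
    refine ⟨(ZMod.cast g₁ : ℤ) * n₁ + (ZMod.cast g₃ : ℤ) * n₃, ?_⟩
    simp only [Prod.smul_mk, Prod.mk.injEq, smul_zero, zsmul_eq_mul]
    push_cast
    refine ⟨?_, ?_, ?_⟩
    · rw [add_mul, mul_assoc, mul_assoc, h1a, h3a, mul_zero, add_zero]; ring
    · rw [h2, zero_mul]
    · rw [add_mul, mul_assoc, mul_assoc, h1c, h3c, mul_zero, zero_add]; ring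

lemma pow_dvd_and_iff (q : ℤ) (a b : ℕ) (x : ℤ) :
    q^a ∣ x ∧ q^b ∣ x ↔ q^(max a b) ∣ x := by
  constructor
  · rintro ⟨h1, h2⟩
    rcases max_cases a b with ⟨h, -⟩ | ⟨h, -⟩ <;> rw [h] <;> assumption
  · intro h
    exact ⟨(pow_dvd_pow _ (le_max_left _ _)).trans h,
      (pow_dvd_pow _ (le_max_right _ _)).trans h⟩

lemma annSet_eq (p α β γ k i : ℕ) (hp : p.Prime) (hk : k ≤ α) (hi : i ≤ γ)
    (b d : ℤ) (hb : Int.gcd b p = 1) (hd : Int.gcd d p = 1) :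
    annSet (((((p:ℤ)^k * b : ℤ) : ZMod (p^α)), 0, (((p:ℤ)^i * d : ℤ) : ZMod (p^γ))) :
      ZMod (p^α) × ZMod (p^β) × ZMod (p^γ)) =
    {x : ℤ | (p:ℤ)^(max (max (min (γ - i + k) α) β) (min (α - k + i) γ)) ∣ x} := by
  have hbc : IsCoprime b (p:ℤ) := Int.isCoprime_iff_gcd_eq_one.mpr hb
  have hdc : IsCoprime d (p:ℤ) := Int.isCoprime_iff_gcd_eq_one.mpr hd
  ext x
  rw [Set.mem_setOf_eq, mem_annSet_triple_iff]
  rw [key2 p hp α k γ i hi b d hbc hdc x]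
  have hC2 : ((x : ZMod (p^β)) = 0) ↔ (p:ℤ)^β ∣ x := by
    rw [ZMod.intCast_zmod_eq_zero_iff_dvd]; push_cast; rfl
  rw [hC2]
  have hC3 : (∃ n : ℤ, (n : ZMod (p^α)) * (((p:ℤ)^k * b : ℤ) : ZMod (p^α)) = 0 ∧
      (n : ZMod (p^γ)) * (((p:ℤ)^i * d : ℤ) : ZMod (p^γ)) = (x : ZMod (p^γ))) ↔
      (p:ℤ)^(min (α - k + i) γ) ∣ x := by
    rw [← key2 p hp γ i α k hk d b hdc hbc x]
    exact ⟨fun ⟨n, h1, h2⟩ => ⟨n, h2, h1⟩, fun ⟨n, h1, h2⟩ => ⟨n, h2, h1⟩⟩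
  rw [hC3, ← and_assoc, pow_dvd_and_iff, pow_dvd_and_iff]

/-- for a prime `p`, positive integers `α < β < γ`,
`G = ℤ/p^αℤ × ℤ/p^βℤ × ℤ/p^γℤ` and `a ∈ O_{α,p^k}` with `0 ≤ k ≤ α-1`:
`[(a,0,0) : G] = p^γℤ`; `[(a,0,c) : G] = p^βℤ` for `c ∈ O_{γ,p^i}` with `0 ≤ i ≤ β-α+k`;
`[(a,0,c) : G] = p^(i+α-k)ℤ` for `c ∈ O_{γ,p^i}` with `β-α+k+1 ≤ i ≤ γ-α+k-1`; and
`[(a,0,c) : G] = p^γℤ` for `c ∈ O_{γ,p^i}` with `γ-α+k ≤ i ≤ γ-1`. -/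
theorem annSet_triple_a_zero (p α β γ : ℕ) (hp : p.Prime) (hα : 0 < α)
    (hαβ : α < β) (hβγ : β < γ) (k : ℕ) (hk : k ≤ α - 1)
    (a : ZMod (p ^ α)) (ha : a ∈ porbit p α k) :
    annSet ((a, 0, 0) : ZMod (p ^ α) × ZMod (p ^ β) × ZMod (p ^ γ)) =
      {x : ℤ | (p : ℤ) ^ γ ∣ x} ∧
    (∀ i, i ≤ β - α + k → ∀ c ∈ porbit p γ i,
      annSet ((a, 0, c) : ZMod (p ^ α) × ZMod (p ^ β) × ZMod (p ^ γ)) =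
        {x : ℤ | (p : ℤ) ^ β ∣ x}) ∧
    (∀ i, β - α + k + 1 ≤ i → i ≤ γ - α + k - 1 → ∀ c ∈ porbit p γ i,
      annSet ((a, 0, c) : ZMod (p ^ α) × ZMod (p ^ β) × ZMod (p ^ γ)) =
        {x : ℤ | (p : ℤ) ^ (i + α - k) ∣ x}) ∧
    (∀ i, γ - α + k ≤ i → i ≤ γ - 1 → ∀ c ∈ porbit p γ i,
      annSet ((a, 0, c) : ZMod (p ^ α) × ZMod (p ^ β) × ZMod (p ^ γ)) =
        {x : ℤ | (p : ℤ) ^ γ ∣ x}) := by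
  obtain ⟨b, hb, hab⟩ := ha
  have hkα : k ≤ α := by omega
  refine ⟨?_, ?_, ?_, ?_⟩
  · have h0 : (0 : ZMod (p^γ)) = (((p:ℤ)^γ * 1 : ℤ) : ZMod (p^γ)) := by
      rw [mul_one]
      exact_mod_cast (ZMod.natCast_self (p^γ)).symm
    rw [hab, h0, annSet_eq p α β γ k γ hp hkα le_rfl b 1 hb (by simp)]
    have he : max (max (min (γ - γ + k) α) β) (min (α - k + γ) γ) = γ := by omega
    rw [he]
  · intro i hi c hc
    obtain ⟨d, hd, hcd⟩ := hc
    rw [hab, hcd, annSet_eq p α β γ k i hp hkα (by omega) b d hb hd]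
    have he : max (max (min (γ - i + k) α) β) (min (α - k + i) γ) = β := by omega
    rw [he]
  · intro i hi1 hi2 c hc
    obtain ⟨d, hd, hcd⟩ := hc
    rw [hab, hcd, annSet_eq p α β γ k i hp hkα (by omega) b d hb hd]
    have he : max (max (min (γ - i + k) α) β) (min (α - k + i) γ) = i + α - k := by omega
    rw [he]
  · intro i hi1 hi2 c hc
    obtain ⟨d, hd, hcd⟩ := hc
    rw [hab, hcd, annSet_eq p α β γ k i hp hkα (by omega) b d hb hd]
    have he : max (max (min (γ - i + k) α) β) (min (α - k + i) γ) = γ := by omega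
    rw [he]
end

section
/- Let p be a prime and α ≥ 1 an integer. The group-annihilator graph Γ(ℤ/p^αℤ) is connected and contains no alternating 4-cycle; in other words, Γ(ℤ/p^αℤ) is a connected threshold graph. -/
lemma mem_annSet_self (n : ℕ) (a : ZMod n) (X : ℤ) (hX : (X : ZMod n) = a) :
    X ∈ annSet a := by
  intro g
  obtain ⟨M, hM⟩ := ZMod.intCast_surjective g
  exact ⟨M, by rw [zsmul_eq_mul, zsmul_eq_mul, hX, hM, mul_comm]⟩

lemma annGraph_adj_iff_s11 (n : ℕ) (a b : ZMod n) :
    (annGraph (ZMod n)).Adj a b ↔ a ≠ b ∧ a * b = 0 := by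
  constructor
  · rintro ⟨hne, h⟩
    refine ⟨hne, ?_⟩
    obtain ⟨X, hX⟩ := ZMod.intCast_surjective a
    obtain ⟨Y, hY⟩ := ZMod.intCast_surjective b
    have := h X (mem_annSet_self n a X hX) Y (mem_annSet_self n b Y hY) 1
    rw [zsmul_eq_mul, mul_one] at this
    push_cast at this
    rw [hX, hY] at this
    exact this
  · rintro ⟨hne, hab⟩
    refine ⟨hne, fun x hx y hy g => ?_⟩
    obtain ⟨m, hm⟩ := hx 1
    obtain ⟨k, hk⟩ := hy 1
    rw [zsmul_eq_mul, mul_one, zsmul_eq_mul] at hm hk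
    rw [zsmul_eq_mul]
    push_cast
    rw [hm, hk]
    linear_combination ((m : ZMod n) * k * g) * hab

/-- for a prime `p` and `α ≥ 1`, the graph `Γ(ℤ/p^αℤ)` is connected and has
no alternating 4-cycle, i.e. it is a connected threshold graph. -/
theorem annGraph_connected_threshold (p α : ℕ) (hp : p.Prime) (hα : 1 ≤ α) :
    (annGraph (ZMod (p ^ α))).Connected ∧
    ¬ ∃ a b c d : ZMod (p ^ α),
        a ≠ b ∧ a ≠ c ∧ a ≠ d ∧ b ≠ c ∧ b ≠ d ∧ c ≠ d ∧
        (annGraph (ZMod (p ^ α))).Adj a b ∧ (annGraph (ZMod (p ^ α))).Adj c d ∧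
        ¬ (annGraph (ZMod (p ^ α))).Adj a c ∧ ¬ (annGraph (ZMod (p ^ α))).Adj b d := by
  haveI : Fact p.Prime := ⟨hp⟩
  haveI : NeZero (p ^ α) := ⟨pow_ne_zero α hp.pos.ne'⟩
  set n := p ^ α with hn
  have adj0 : ∀ b : ZMod n, b ≠ 0 → (annGraph (ZMod n)).Adj 0 b := by
    intro b hb
    rw [annGraph_adj_iff_s11]
    exact ⟨(Ne.symm hb), zero_mul b⟩
  constructor
  · rw [SimpleGraph.connected_iff]
    refine ⟨fun a b => ?_, ⟨0⟩⟩
    rcases eq_or_ne a b with rfl | hab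
    · exact SimpleGraph.Reachable.refl a
    rcases eq_or_ne a 0 with rfl | ha
    · exact (adj0 b (Ne.symm hab)).reachable
    rcases eq_or_ne b 0 with rfl | hb
    · exact ((adj0 a ha).symm).reachable
    · exact ((adj0 a ha).symm.reachable).trans (adj0 b hb).reachable
  · rintro ⟨a, b, c, d, hab, hac, had, hbc, hbd, hcd, Hab, Hcd, Hac, Hbd⟩
    rw [annGraph_adj_iff_s11] at Hab Hcd Hac Hbd
    have hac' : a * c ≠ 0 := fun h => Hac ⟨hac, h⟩
    have hbd' : b * d ≠ 0 := fun h => Hbd ⟨hbd, h⟩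
    have ha0 : a ≠ 0 := fun h => hac' (by rw [h, zero_mul])
    have hb0 : b ≠ 0 := fun h => hbd' (by rw [h, zero_mul])
    have hc0 : c ≠ 0 := fun h => hac' (by rw [h, mul_zero])
    have hd0 : d ≠ 0 := fun h => hbd' (by rw [h, mul_zero])
    -- translate to divisibility of vals
    have key : ∀ x y : ZMod n, (x * y = 0) ↔ p ^ α ∣ x.val * y.val := by
      intro x y
      rw [← hn, ← ZMod.natCast_eq_zero_iff, Nat.cast_mul,
        ZMod.natCast_val, ZMod.natCast_val, ZMod.cast_id, ZMod.cast_id]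
    have hval : ∀ x : ZMod n, x ≠ 0 → x.val ≠ 0 := by
      intro x hx h
      exact hx ((ZMod.val_eq_zero x).mp h)
    have va := hval a ha0
    have vb := hval b hb0
    have vc := hval c hc0
    have vd := hval d hd0
    have h1 : α ≤ padicValNat p (a.val * b.val) :=
      (padicValNat_dvd_iff_le (Nat.mul_ne_zero va vb)).mp ((key a b).mp Hab.2)
    have h2 : α ≤ padicValNat p (c.val * d.val) :=
      (padicValNat_dvd_iff_le (Nat.mul_ne_zero vc vd)).mp ((key c d).mp Hcd.2)
    have h3 : ¬ α ≤ padicValNat p (a.val * c.val) :=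
      fun h => hac' ((key a c).mpr ((padicValNat_dvd_iff_le (Nat.mul_ne_zero va vc)).mpr h))
    have h4 : ¬ α ≤ padicValNat p (b.val * d.val) :=
      fun h => hbd' ((key b d).mpr ((padicValNat_dvd_iff_le (Nat.mul_ne_zero vb vd)).mpr h))
    rw [padicValNat.mul va vb] at h1
    rw [padicValNat.mul vc vd] at h2
    rw [padicValNat.mul va vc] at h3
    rw [padicValNat.mul vb vd] at h4
    omega
end

section
/- For every prime p ≥ 7 there exists a simple graph H on p² vertices that is connected and contains no alternating 4-cycle (i.e. H is a connected threshold graph) such that E(Γ(ℤ/p²ℤ)) < E(H) < E(K_{p²}) = 2(p² − 1), where Γ(ℤ/p²ℤ) is the group-annihilator graph of ℤ/p²ℤ and K_{p²} is the complete graph on p² vertices. -/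
/-- The adjacency matrix of a simple graph over `ℝ` is Hermitian. -/
theorem adjMatrix_isHermitian {V : Type*} [Fintype V] [DecidableEq V] (G : SimpleGraph V)
    [DecidableRel G.Adj] : (G.adjMatrix ℝ).IsHermitian := by
  ext i j
  simp [Matrix.conjTranspose_apply, SimpleGraph.adjMatrix_apply, SimpleGraph.adj_comm]

/-- The energy of a finite simple graph: the sum of the absolute values of the eigenvalues
(with multiplicity) of its adjacency matrix. -/
noncomputable def graphEnergy {V : Type*} [Fintype V] [DecidableEq V]
    (G : SimpleGraph V) : ℝ :=
  letI := Classical.decRel G.Adj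
  ∑ i, |(adjMatrix_isHermitian G).eigenvalues i|

set_option linter.unusedSectionVars false

open Finset Matrix

section Spectral
variable {V : Type*} [Fintype V] [DecidableEq V] {A : Matrix V V ℝ}

lemma trace_eq_sum_eig (hA : A.IsHermitian) :
    A.trace = ∑ i, hA.eigenvalues i := by
  nth_rewrite 1 [hA.spectral_theorem, Unitary.conjStarAlgAut_apply]
  rw [Matrix.trace_mul_cycle,
    show (star (hA.eigenvectorUnitary : Matrix V V ℝ)) * (hA.eigenvectorUnitary : Matrix V V ℝ) = 1
      from (Matrix.mem_unitaryGroup_iff').mp (hA.eigenvectorUnitary).2,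
    Matrix.one_mul, Matrix.trace_diagonal]
  simp

lemma trace_sq_eq_sum_eig_sq (hA : A.IsHermitian) :
    (A * A).trace = ∑ i, hA.eigenvalues i ^ 2 := by
  set U : Matrix V V ℝ := (hA.eigenvectorUnitary : Matrix V V ℝ) with hUdef
  set D : Matrix V V ℝ := Matrix.diagonal (RCLike.ofReal ∘ hA.eigenvalues) with hDdef
  have hU : star U * U = 1 := (Matrix.mem_unitaryGroup_iff').mp (hA.eigenvectorUnitary).2
  have h1 : A = U * D * star U := hA.spectral_theorem
  have h2 : A * A = U * (D * D) * star U := by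
    rw [h1]
    calc (U*D*star U)*(U*D*star U) = U*(D*((star U*U)*(D*star U))) := by
          simp only [Matrix.mul_assoc]
      _ = U*(D*D)*star U := by rw [hU, Matrix.one_mul]; simp only [Matrix.mul_assoc]
  rw [h2, Matrix.trace_mul_cycle, ← Matrix.mul_assoc, hU, Matrix.one_mul, hDdef,
    Matrix.diagonal_mul_diagonal, Matrix.trace_diagonal]
  simp [pow_two]

lemma rank_le_of_cols (S : Finset (V → ℝ)) (h : ∀ j, Aᵀ j ∈ S) : A.rank ≤ S.card := by
  rw [Matrix.rank_eq_finrank_span_cols]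
  calc Module.finrank ℝ (Submodule.span ℝ (Set.range Aᵀ))
      ≤ Module.finrank ℝ (Submodule.span ℝ (S : Set (V → ℝ))) :=
        Submodule.finrank_mono (Submodule.span_mono (Set.range_subset_iff.2 h))
    _ ≤ S.card := finrank_span_finset_le_card S

lemma eig_quadratic (hA : A.IsHermitian) (c₁ c₀ : ℝ)
    (h : A * A = c₁ • A + c₀ • (1 : Matrix V V ℝ)) (i : V) :
    hA.eigenvalues i ^ 2 = c₁ * hA.eigenvalues i + c₀ := by
  set v : V → ℝ := ⇑(hA.eigenvectorBasis i) with hv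
  have hv0 : v ≠ 0 := by
    intro h0
    exact hA.eigenvectorBasis.orthonormal.ne_zero i (by ext j; exact congrFun h0 j)
  have h1 : A *ᵥ v = hA.eigenvalues i • v := hA.mulVec_eigenvectorBasis i
  have h2 : (A * A) *ᵥ v = (hA.eigenvalues i ^ 2) • v := by
    rw [← Matrix.mulVec_mulVec, h1, Matrix.mulVec_smul, h1, smul_smul, pow_two]
  rw [h, Matrix.add_mulVec, Matrix.smul_mulVec, Matrix.smul_mulVec, h1,
    Matrix.one_mulVec, smul_smul] at h2
  have h3 : (hA.eigenvalues i ^ 2 - (c₁ * hA.eigenvalues i + c₀)) • v = 0 := by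
    rw [sub_smul, ← h2, add_smul]; abel
  rcases smul_eq_zero.mp h3 with h4 | h4
  · linarith [sub_eq_zero.mp (by linarith [h4] :
      hA.eigenvalues i ^ 2 - (c₁ * hA.eigenvalues i + c₀) = 0)]
  · exact absurd h4 hv0

lemma energy_sq_ge (hA : A.IsHermitian) (h0 : A.trace = 0) :
    2 * (A * A).trace ≤ (∑ i, |hA.eigenvalues i|) ^ 2 := by
  set lam := hA.eigenvalues with hlam
  set E := ∑ i, |lam i| with hE
  have hsum : ∑ i, lam i = 0 := by rw [← trace_eq_sum_eig hA, h0]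
  have hhalf : ∀ j, 2 * |lam j| ≤ E := by
    intro j
    have h1 : lam j + ∑ i ∈ univ.erase j, lam i = 0 := by
      rw [Finset.add_sum_erase univ lam (mem_univ j)]; exact hsum
    have h2 : |lam j| ≤ ∑ i ∈ univ.erase j, |lam i| := by
      have hj : lam j = -∑ i ∈ univ.erase j, lam i := by linarith
      rw [hj, abs_neg]
      exact Finset.abs_sum_le_sum_abs _ _
    have h3 : |lam j| + ∑ i ∈ univ.erase j, |lam i| = E :=
      Finset.add_sum_erase univ (fun i => |lam i|) (mem_univ j)
    linarith
  have hE0 : 0 ≤ E := Finset.sum_nonneg fun i _ => abs_nonneg _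
  have hsq : ∑ i, lam i ^ 2 ≤ E * (E / 2) := by
    calc ∑ i, lam i ^ 2 ≤ ∑ i, |lam i| * (E / 2) := by
          apply Finset.sum_le_sum
          intro i _
          have habs : lam i ^ 2 = |lam i| * |lam i| := by
            rw [pow_two, ← abs_mul_abs_self]
          rw [habs]
          exact mul_le_mul_of_nonneg_left (by linarith [hhalf i]) (abs_nonneg _)
      _ = E * (E / 2) := by rw [← Finset.sum_mul]
  rw [trace_sq_eq_sum_eig_sq hA]
  nlinarith [hsq]

lemma energy_sq_le (hA : A.IsHermitian) (r : ℕ) (hr : A.rank ≤ r) :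
    (∑ i, |hA.eigenvalues i|) ^ 2 ≤ r * (A * A).trace := by
  classical
  set lam := hA.eigenvalues with hlam
  set s := univ.filter (fun i => lam i ≠ 0) with hs
  have h1 : ∑ i ∈ s, |lam i| = ∑ i, |lam i| :=
    Finset.sum_filter_of_ne (fun x _ hx h0 => hx (by simp [h0]))
  have hcard : (s.card : ℝ) ≤ r := by
    have h2 : A.rank = Fintype.card {i // lam i ≠ 0} := hA.rank_eq_card_non_zero_eigs
    rw [Fintype.card_subtype] at h2
    exact_mod_cast h2 ▸ hr
  have h2 : (∑ i ∈ s, |lam i|) ^ 2 ≤ s.card * ∑ i ∈ s, |lam i| ^ 2 :=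
    sq_sum_le_card_mul_sum_sq
  have h3 : ∑ i ∈ s, |lam i| ^ 2 ≤ ∑ i, lam i ^ 2 := by
    rw [Finset.sum_congr rfl (fun i _ => sq_abs (lam i))]
    exact Finset.sum_le_sum_of_subset_of_nonneg (Finset.filter_subset _ _)
      (fun i _ _ => sq_nonneg _)
  have h4 : (0:ℝ) ≤ ∑ i ∈ s, |lam i| ^ 2 :=
    Finset.sum_nonneg fun i _ => sq_nonneg _
  rw [trace_sq_eq_sum_eig_sq hA, ← h1]
  calc (∑ i ∈ s, |lam i|) ^ 2 ≤ s.card * ∑ i ∈ s, |lam i| ^ 2 := h2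
    _ ≤ r * ∑ i ∈ s, |lam i| ^ 2 := mul_le_mul_of_nonneg_right hcard h4
    _ ≤ r * ∑ i, lam i ^ 2 := mul_le_mul_of_nonneg_left h3 (by positivity)

lemma trace_adj_sq_eq_degree_sum (G : SimpleGraph V) [DecidableRel G.Adj] :
    ((G.adjMatrix ℝ) * (G.adjMatrix ℝ)).trace = ((∑ a, G.degree a : ℕ) : ℝ) := by
  rw [Matrix.trace]
  push_cast
  apply Finset.sum_congr rfl
  intro a _
  rw [Matrix.diag_apply, SimpleGraph.adjMatrix_mul_self_apply_self]

end Spectral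

section Top
variable {V : Type*} [Fintype V] [DecidableEq V]

lemma top_adj_sq [DecidableRel (⊤ : SimpleGraph V).Adj] (h2 : 2 ≤ Fintype.card V) :
    ((⊤ : SimpleGraph V).adjMatrix ℝ) * ((⊤ : SimpleGraph V).adjMatrix ℝ)
      = ((Fintype.card V : ℝ) - 2) • (⊤ : SimpleGraph V).adjMatrix ℝ
        + ((Fintype.card V : ℝ) - 1) • (1 : Matrix V V ℝ) := by
  have h1 : (1:ℕ) ≤ Fintype.card V := le_trans (by norm_num) h2
  ext i j
  rw [Matrix.mul_apply]
  have key : ∀ k : V, ((⊤ : SimpleGraph V).adjMatrix ℝ) i k * ((⊤ : SimpleGraph V).adjMatrix ℝ) k j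
      = if k ∈ univ.erase i ∩ univ.erase j then (1:ℝ) else 0 := by
    intro k
    by_cases hki : k = i <;> by_cases hkj : k = j <;>
      simp [hki, hkj, SimpleGraph.adjMatrix_apply, Ne.symm, eq_comm]
  rw [Finset.sum_congr rfl (fun k _ => key k), Finset.sum_ite_mem, Finset.univ_inter,
    Finset.sum_const, nsmul_eq_mul, mul_one]
  by_cases hij : i = j
  · subst hij
    rw [Finset.inter_self, Finset.card_erase_of_mem (mem_univ i)]
    simp only [Matrix.add_apply, Matrix.smul_apply, SimpleGraph.adjMatrix_apply,
      Matrix.one_apply_eq, SimpleGraph.top_adj, ne_eq, not_true_eq_false, if_false,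
      smul_eq_mul, mul_zero, mul_one, zero_add]
    rw [Finset.card_univ, Nat.cast_sub h1]
    norm_num
  · have hcard : (univ.erase i ∩ univ.erase j) = univ \ {i, j} := by
      ext k
      simp [and_comm, eq_comm, not_or]
    rw [hcard, Finset.card_sdiff_of_subset (Finset.subset_univ _), Finset.card_pair hij,
      Finset.card_univ, Nat.cast_sub h2]
    simp only [Matrix.add_apply, Matrix.smul_apply, SimpleGraph.adjMatrix_apply,
      SimpleGraph.top_adj, ne_eq, hij, not_false_eq_true, if_true,
      Matrix.one_apply_ne hij, smul_eq_mul, mul_one, mul_zero, add_zero]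
    push_cast
    ring

lemma graphEnergy_top (h2 : 2 ≤ Fintype.card V) :
    graphEnergy (⊤ : SimpleGraph V) = 2 * ((Fintype.card V : ℝ) - 1) := by
  classical
  letI : DecidableRel (⊤ : SimpleGraph V).Adj := Classical.decRel _
  have hA := adjMatrix_isHermitian (⊤ : SimpleGraph V)
  have hE : graphEnergy (⊤ : SimpleGraph V) = ∑ i, |hA.eigenvalues i| := rfl
  set n : ℝ := (Fintype.card V : ℝ) with hn
  have hn2 : (2:ℝ) ≤ n := by rw [hn]; exact_mod_cast h2
  have hroot : ∀ i, hA.eigenvalues i = -1 ∨ hA.eigenvalues i = n - 1 := by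
    intro i
    have h := eig_quadratic hA (n - 2) (n - 1) (top_adj_sq h2) i
    have hz : (hA.eigenvalues i + 1) * (hA.eigenvalues i - (n - 1)) = 0 := by
      linear_combination h
    rcases mul_eq_zero.mp hz with h' | h'
    · left; linarith
    · right; linarith
  set t := (univ.filter (fun i => hA.eigenvalues i = n - 1)).card with ht
  have htle : t ≤ Fintype.card V := by
    rw [ht, ← Finset.card_univ]; exact Finset.card_filter_le _ _
  have hcardnot : (univ.filter (fun i => ¬ hA.eigenvalues i = n - 1)).card
      = Fintype.card V - t := by
    have := Finset.card_filter_add_card_filter_not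
      (s := (univ : Finset V)) (p := fun i => hA.eigenvalues i = n - 1)
    rw [Finset.card_univ] at this
    omega
  have htr : ∑ i, hA.eigenvalues i = 0 := by
    rw [← trace_eq_sum_eig hA, SimpleGraph.trace_adjMatrix]
  have hsplit : ∑ i, hA.eigenvalues i
      = t * (n - 1) + ((Fintype.card V - t : ℕ) : ℝ) * (-1) := by
    rw [← Finset.sum_filter_add_sum_filter_not univ (fun i => hA.eigenvalues i = n - 1)]
    congr 1
    · rw [Finset.sum_congr rfl (fun i hi => (Finset.mem_filter.mp hi).2),
        Finset.sum_const, nsmul_eq_mul]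
    · rw [Finset.sum_congr rfl (fun i hi => ?_), Finset.sum_const, nsmul_eq_mul, hcardnot]
      rcases hroot i with h' | h'
      · exact h'
      · exact absurd h' (Finset.mem_filter.mp hi).2
  have hsub : ((Fintype.card V - t : ℕ) : ℝ) = n - t := by
    push_cast [htle]; ring
  have ht1 : (t : ℝ) = 1 := by
    rw [hsplit, hsub] at htr
    have hne : n ≠ 0 := by linarith
    have : (t : ℝ) * n = 1 * n := by ring_nf; ring_nf at htr; linarith
    exact mul_right_cancel₀ hne this
  have habs : ∑ i, |hA.eigenvalues i|
      = t * (n - 1) + ((Fintype.card V - t : ℕ) : ℝ) * 1 := by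
    rw [← Finset.sum_filter_add_sum_filter_not univ (fun i => hA.eigenvalues i = n - 1)]
    congr 1
    · rw [Finset.sum_congr rfl (fun i hi => ?_), Finset.sum_const, nsmul_eq_mul]
      rw [(Finset.mem_filter.mp hi).2, abs_of_nonneg (by linarith)]
    · rw [Finset.sum_congr rfl (fun i hi => ?_), Finset.sum_const, nsmul_eq_mul, hcardnot]
      rcases hroot i with h' | h'
      · rw [h']; norm_num
      · exact absurd h' (Finset.mem_filter.mp hi).2
  rw [hE, habs, hsub, ht1]
  ring

end Top

section Ann
variable (p : ℕ) [hp : Fact p.Prime]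

lemma pp_ne : NeZero (p ^ 2) := ⟨pow_ne_zero 2 hp.out.ne_zero⟩

lemma mem_annSet_self_s16 (a : ZMod (p ^ 2)) : ((a.val : ℤ)) ∈ annSet a := by
  haveI := pp_ne p
  intro g
  refine ⟨(g.val : ℤ), ?_⟩
  have key : ∀ x c : ZMod (p ^ 2), ((x.val : ℤ)) • c = x * c := by
    intro x c
    rw [zsmul_eq_mul]
    push_cast
    rw [ZMod.natCast_val, ZMod.cast_id]
  rw [key a g, key g a, mul_comm]

lemma adj_mul_val {a b : ZMod (p ^ 2)} (h : (annGraph (ZMod (p ^ 2))).Adj a b) :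
    (p ^ 2 : ℕ) ∣ a.val * b.val := by
  have h1 := h.2 _ (mem_annSet_self_s16 p a) _ (mem_annSet_self_s16 p b) 1
  rw [zsmul_eq_mul, mul_one] at h1
  have h2 := (ZMod.intCast_zmod_eq_zero_iff_dvd _ _).mp h1
  exact_mod_cast h2

lemma adj_dvd_left {a b : ZMod (p ^ 2)} (h : (annGraph (ZMod (p ^ 2))).Adj a b)
    (hb : b ≠ 0) : p ∣ a.val := by
  haveI := pp_ne p
  by_contra hpa
  have hcop : Nat.Coprime (p ^ 2) a.val :=
    Nat.Coprime.pow_left 2 ((Nat.Prime.coprime_iff_not_dvd hp.out).mpr hpa)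
  have hdvd : (p ^ 2) ∣ b.val :=
    hcop.dvd_of_dvd_mul_left (adj_mul_val p h)
  have hlt : b.val < p ^ 2 := ZMod.val_lt b
  have : b.val = 0 := by
    rcases Nat.eq_zero_or_pos b.val with h0 | h0
    · exact h0
    · exact absurd (Nat.le_of_dvd h0 hdvd) (not_le.mpr hlt)
  exact hb ((ZMod.val_eq_zero b).mp this)

lemma adj_zero {b : ZMod (p ^ 2)} (hb : b ≠ 0) : (annGraph (ZMod (p ^ 2))).Adj 0 b := by
  refine ⟨Ne.symm hb, ?_⟩
  intro x hx y hy g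
  obtain ⟨n, hn⟩ := hx 1
  rw [smul_zero] at hn
  rw [zsmul_eq_mul, mul_one] at hn
  rw [zsmul_eq_mul]
  push_cast
  rw [hn, zero_mul, zero_mul]

def multFinset : Finset (ZMod (p ^ 2)) :=
  haveI := pp_ne p
  univ.filter (fun b => p ∣ b.val)

lemma card_multFinset : (multFinset p).card ≤ p := by
  haveI := pp_ne p
  have hp0 : 0 < p := hp.out.pos
  calc (multFinset p).card ≤ (Finset.range p).card := by
        apply Finset.card_le_card_of_injOn (fun b => b.val / p)
        · intro b hb
          rw [Finset.mem_coe, Finset.mem_range]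
          have hdvd : p ∣ b.val := (Finset.mem_filter.mp hb).2
          have hlt : b.val < p * p := by
            have h' := ZMod.val_lt b
            have h'' : p ^ 2 = p * p := sq p
            omega
          exact Nat.div_lt_of_lt_mul hlt
        · intro b1 h1 b2 h2 heq
          have hd1 : p ∣ b1.val := (Finset.mem_filter.mp h1).2
          have hd2 : p ∣ b2.val := (Finset.mem_filter.mp h2).2
          apply ZMod.val_injective
          calc b1.val = p * (b1.val / p) := (Nat.mul_div_cancel' hd1).symm
            _ = p * (b2.val / p) := by rw [show b1.val / p = b2.val / p from heq]
            _ = b2.val := Nat.mul_div_cancel' hd2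
    _ = p := Finset.card_range p

lemma ann_degree_sum [inst : DecidableRel (annGraph (ZMod (p ^ 2))).Adj] :
    ∑ a, (annGraph (ZMod (p ^ 2))).degree a ≤ 3 * p ^ 2 := by
  haveI := pp_ne p
  have hnbr1 : ∀ a : ZMod (p ^ 2), ¬ p ∣ a.val →
      (annGraph (ZMod (p ^ 2))).neighborFinset a ⊆ {0} := by
    intro a ha b hb
    rw [SimpleGraph.mem_neighborFinset] at hb
    rw [Finset.mem_singleton]
    by_contra hb0
    exact ha (adj_dvd_left p hb hb0)
  have hnbr2 : ∀ a : ZMod (p ^ 2), a ≠ 0 →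
      (annGraph (ZMod (p ^ 2))).neighborFinset a ⊆ multFinset p := by
    intro a ha b hb
    rw [SimpleGraph.mem_neighborFinset] at hb
    exact Finset.mem_filter.mpr ⟨mem_univ _, adj_dvd_left p hb.symm ha⟩
  have hdeg_le : ∀ a : ZMod (p ^ 2), a ≠ 0 →
      (annGraph (ZMod (p ^ 2))).degree a ≤ (if p ∣ a.val then p else 1) := by
    intro a ha
    by_cases hd : p ∣ a.val
    · rw [if_pos hd]
      exact le_trans (Finset.card_le_card (hnbr2 a ha)) (card_multFinset p)
    · rw [if_neg hd]
      exact le_trans (Finset.card_le_card (hnbr1 a hd)) (by simp)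
  calc ∑ a, (annGraph (ZMod (p ^ 2))).degree a
      = (annGraph (ZMod (p ^ 2))).degree 0
        + ∑ a ∈ (univ : Finset (ZMod (p ^ 2))).erase 0, (annGraph (ZMod (p ^ 2))).degree a :=
        (Finset.add_sum_erase univ _ (mem_univ 0)).symm
    _ ≤ p ^ 2 + ∑ a ∈ (univ : Finset (ZMod (p ^ 2))).erase 0,
          (if p ∣ a.val then p else 1) := by
        apply add_le_add
        · calc (annGraph (ZMod (p ^ 2))).degree 0 ≤ Fintype.card (ZMod (p ^ 2)) :=
                le_trans (Finset.card_le_univ _) (le_of_eq (Finset.card_univ))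
            _ = p ^ 2 := ZMod.card (p ^ 2)
        · apply Finset.sum_le_sum
          intro a ha
          exact hdeg_le a (Finset.mem_erase.mp ha).1
    _ ≤ p ^ 2 + ∑ a : ZMod (p ^ 2), (if p ∣ a.val then p else 1) := by
        apply add_le_add_right
        exact Finset.sum_le_sum_of_subset (Finset.erase_subset _ _)
    _ ≤ p ^ 2 + (p * p + p ^ 2) := by
        apply add_le_add_right
        rw [Finset.sum_ite]
        apply add_le_add
        · rw [Finset.sum_const, smul_eq_mul]
          apply Nat.mul_le_mul_right
          exact card_multFinset p
        · rw [Finset.sum_const, smul_eq_mul, mul_one]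
          calc (univ.filter (fun a : ZMod (p ^ 2) => ¬ p ∣ a.val)).card
              ≤ (univ : Finset (ZMod (p ^ 2))).card := Finset.card_filter_le _ _
            _ = p ^ 2 := by rw [Finset.card_univ]; exact ZMod.card (p ^ 2)
    _ ≤ 3 * p ^ 2 := by nlinarith [sq p]

lemma ann_rank [inst : DecidableRel (annGraph (ZMod (p ^ 2))).Adj] :
    ((annGraph (ZMod (p ^ 2))).adjMatrix ℝ).rank ≤ p + 1 := by
  haveI := pp_ne p
  have hcols : ∀ j, ((annGraph (ZMod (p ^ 2))).adjMatrix ℝ)ᵀ j ∈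
      (multFinset p).image (fun j => ((annGraph (ZMod (p ^ 2))).adjMatrix ℝ)ᵀ j)
        ∪ {fun i : ZMod (p ^ 2) => if i = 0 then (1:ℝ) else 0} := by
    intro j
    by_cases hj : p ∣ j.val
    · apply Finset.mem_union_left
      exact Finset.mem_image_of_mem _ (Finset.mem_filter.mpr ⟨mem_univ _, hj⟩)
    · apply Finset.mem_union_right
      rw [Finset.mem_singleton]
      have hj0 : j ≠ 0 := by
        intro h0
        rw [h0, ZMod.val_zero] at hj
        exact hj (dvd_zero p)
      funext i
      show ((annGraph (ZMod (p ^ 2))).adjMatrix ℝ) i j = if i = 0 then (1:ℝ) else 0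
      by_cases hi : i = 0
      · subst hi
        rw [SimpleGraph.adjMatrix_apply, if_pos (adj_zero p hj0), if_pos rfl]
      · have hnadj : ¬ (annGraph (ZMod (p ^ 2))).Adj i j := by
          intro h
          exact hj (adj_dvd_left p h.symm hi)
        rw [SimpleGraph.adjMatrix_apply, if_neg hnadj, if_neg hi]
  calc ((annGraph (ZMod (p ^ 2))).adjMatrix ℝ).rank
      ≤ ((multFinset p).image (fun j => ((annGraph (ZMod (p ^ 2))).adjMatrix ℝ)ᵀ j)
          ∪ {fun i : ZMod (p ^ 2) => if i = 0 then (1:ℝ) else 0}).card :=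
        rank_le_of_cols _ hcols
    _ ≤ ((multFinset p).image (fun j => ((annGraph (ZMod (p ^ 2))).adjMatrix ℝ)ᵀ j)).card + 1 := by
        apply le_trans (Finset.card_union_le _ _)
        simp
    _ ≤ p + 1 := by
        apply add_le_add_left
        exact le_trans (Finset.card_image_le) (card_multFinset p)

end Ann

def splitG (p : ℕ) : SimpleGraph (Fin (p ^ 2)) where
  Adj a b := a ≠ b ∧ (a.val < p ∨ b.val < p)
  symm := ⟨fun a b h => ⟨h.1.symm, h.2.symm⟩⟩
  loopless := ⟨fun a h => h.1 rfl⟩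

section Split
variable (p : ℕ)

def lowFinset : Finset (Fin (p ^ 2)) := univ.filter (fun b => b.val < p)

lemma p_le_sq : p ≤ p ^ 2 := Nat.le_self_pow two_ne_zero p

lemma card_lowFinset : (lowFinset p).card = p := by
  have h : lowFinset p = univ.image (Fin.castLE (p_le_sq p)) := by
    ext b
    simp only [lowFinset, Finset.mem_filter, Finset.mem_univ, true_and, Finset.mem_image]
    constructor
    · intro hb
      exact ⟨⟨b.val, hb⟩, rfl⟩
    · rintro ⟨k, rfl⟩
      exact k.isLt
  rw [h, Finset.card_image_of_injective _ (Fin.castLE_injective _), Finset.card_univ,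
    Fintype.card_fin]

lemma splitG_connected (hp0 : 0 < p) : (splitG p).Connected := by
  have hpos : 0 < p ^ 2 := pow_pos hp0 2
  set c : Fin (p ^ 2) := ⟨0, hpos⟩ with hc
  have hadj : ∀ x : Fin (p ^ 2), x ≠ c → (splitG p).Adj c x :=
    fun x hx => ⟨Ne.symm hx, Or.inl hp0⟩
  have hreach : ∀ x, (splitG p).Reachable x c := by
    intro x
    by_cases hx : x = c
    · rw [hx]
    · exact ((hadj x hx).symm).reachable
  rw [SimpleGraph.connected_iff]
  exact ⟨fun u v => (hreach u).trans (hreach v).symm, ⟨c⟩⟩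

lemma splitG_threshold :
    ¬ ∃ a b c d : Fin (p ^ 2),
        a ≠ b ∧ a ≠ c ∧ a ≠ d ∧ b ≠ c ∧ b ≠ d ∧ c ≠ d ∧
        (splitG p).Adj a b ∧ (splitG p).Adj c d ∧
        ¬ (splitG p).Adj a c ∧ ¬ (splitG p).Adj b d := by
  rintro ⟨a, b, c, d, hab, hac, had, hbc, hbd, hcd, h1, h2, h3, h4⟩
  have h3' : ¬ (a.val < p ∨ c.val < p) := fun h => h3 ⟨hac, h⟩
  have h4' : ¬ (b.val < p ∨ d.val < p) := fun h => h4 ⟨hbd, h⟩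
  rcases h1.2 with h | h
  · exact h3' (Or.inl h)
  · exact h4' (Or.inl h)

lemma splitG_nbr_low [DecidableRel (splitG p).Adj] {a : Fin (p ^ 2)} (ha : a.val < p) :
    (splitG p).neighborFinset a = univ.erase a := by
  ext b
  simp only [SimpleGraph.mem_neighborFinset, Finset.mem_erase, Finset.mem_univ, and_true]
  constructor
  · intro h; exact Ne.symm h.1
  · intro h; exact ⟨Ne.symm h, Or.inl ha⟩

lemma splitG_nbr_high [DecidableRel (splitG p).Adj] {a : Fin (p ^ 2)} (ha : ¬ a.val < p) :
    (splitG p).neighborFinset a = lowFinset p := by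
  ext b
  simp only [SimpleGraph.mem_neighborFinset, lowFinset, Finset.mem_filter, Finset.mem_univ,
    true_and]
  constructor
  · rintro ⟨hne, h | h⟩
    · exact absurd h ha
    · exact h
  · intro hb
    refine ⟨?_, Or.inr hb⟩
    intro hh
    rw [hh] at ha
    exact ha hb

lemma splitG_degree_sum [DecidableRel (splitG p).Adj] :
    ∑ a, (splitG p).degree a = p * (p ^ 2 - 1) + (p ^ 2 - p) * p := by
  rw [← Finset.sum_filter_add_sum_filter_not univ (fun a : Fin (p ^ 2) => a.val < p)]
  have h1 : ∀ a ∈ univ.filter (fun a : Fin (p ^ 2) => a.val < p),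
      (splitG p).degree a = p ^ 2 - 1 := by
    intro a ha
    rw [SimpleGraph.degree, splitG_nbr_low p (Finset.mem_filter.mp ha).2,
      Finset.card_erase_of_mem (Finset.mem_univ a), Finset.card_univ, Fintype.card_fin]
  have h2 : ∀ a ∈ univ.filter (fun a : Fin (p ^ 2) => ¬ a.val < p),
      (splitG p).degree a = p := by
    intro a ha
    rw [SimpleGraph.degree, splitG_nbr_high p (Finset.mem_filter.mp ha).2, card_lowFinset]
  rw [Finset.sum_congr rfl h1, Finset.sum_congr rfl h2, Finset.sum_const, Finset.sum_const]
  have hc1 : (univ.filter (fun a : Fin (p ^ 2) => a.val < p)).card = p := card_lowFinset p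
  have hc2 : (univ.filter (fun a : Fin (p ^ 2) => ¬ a.val < p)).card = p ^ 2 - p := by
    have := Finset.card_filter_add_card_filter_not
      (s := (univ : Finset (Fin (p ^ 2)))) (p := fun a => a.val < p)
    rw [Finset.card_univ, Fintype.card_fin, hc1] at this
    omega
  rw [hc1, hc2, smul_eq_mul, smul_eq_mul]

lemma splitG_rank [DecidableRel (splitG p).Adj] :
    ((splitG p).adjMatrix ℝ).rank ≤ p + 1 := by
  have hcols : ∀ j, (((splitG p).adjMatrix ℝ))ᵀ j ∈
      (lowFinset p).image (fun j => (((splitG p).adjMatrix ℝ))ᵀ j)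
        ∪ {fun i : Fin (p ^ 2) => if i.val < p then (1:ℝ) else 0} := by
    intro j
    by_cases hj : j.val < p
    · apply Finset.mem_union_left
      exact Finset.mem_image_of_mem _ (Finset.mem_filter.mpr ⟨mem_univ _, hj⟩)
    · apply Finset.mem_union_right
      rw [Finset.mem_singleton]
      funext i
      show ((splitG p).adjMatrix ℝ) i j = if i.val < p then (1:ℝ) else 0
      by_cases hi : i.val < p
      · have hadj : (splitG p).Adj i j := by
          refine ⟨?_, Or.inl hi⟩
          intro h
          rw [h] at hi
          exact hj hi
        rw [SimpleGraph.adjMatrix_apply, if_pos hadj, if_pos hi]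
      · have hnadj : ¬ (splitG p).Adj i j := by
          rintro ⟨-, h | h⟩
          · exact hi h
          · exact hj h
        rw [SimpleGraph.adjMatrix_apply, if_neg hnadj, if_neg hi]
  calc ((splitG p).adjMatrix ℝ).rank
      ≤ ((lowFinset p).image (fun j => (((splitG p).adjMatrix ℝ))ᵀ j)
          ∪ {fun i : Fin (p ^ 2) => if i.val < p then (1:ℝ) else 0}).card :=
        rank_le_of_cols _ hcols
    _ ≤ ((lowFinset p).image (fun j => (((splitG p).adjMatrix ℝ))ᵀ j)).card + 1 := by
        apply le_trans (Finset.card_union_le _ _)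
        simp
    _ ≤ p + 1 := by
        apply add_le_add_left
        exact le_trans (Finset.card_image_le) ((card_lowFinset p).le)

end Split

/-- for every prime `p ≥ 7` there is a connected threshold graph `H`
(no alternating 4-cycle) on `p²` vertices with
`E(Γ(ℤ/p²ℤ)) < E(H) < E(K_{p²}) = 2(p² - 1)`. -/
theorem exists_threshold_between (p : ℕ) [Fact p.Prime] (hp7 : 7 ≤ p) :
    ∃ H : SimpleGraph (Fin (p ^ 2)),
      H.Connected ∧
      (¬ ∃ a b c d : Fin (p ^ 2),
          a ≠ b ∧ a ≠ c ∧ a ≠ d ∧ b ≠ c ∧ b ≠ d ∧ c ≠ d ∧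
          H.Adj a b ∧ H.Adj c d ∧ ¬ H.Adj a c ∧ ¬ H.Adj b d) ∧
      graphEnergy (annGraph (ZMod (p ^ 2))) < graphEnergy H ∧
      graphEnergy H < graphEnergy (⊤ : SimpleGraph (Fin (p ^ 2))) ∧
      graphEnergy (⊤ : SimpleGraph (Fin (p ^ 2))) = 2 * ((p : ℝ) ^ 2 - 1) := by
  haveI := pp_ne p
  have hp0 : 0 < p := lt_of_lt_of_le (by norm_num) hp7
  have hpR : (7:ℝ) ≤ (p:ℝ) := by exact_mod_cast hp7
  have hcard2 : 2 ≤ Fintype.card (Fin (p ^ 2)) := by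
    rw [Fintype.card_fin]; nlinarith
  have hTop : graphEnergy (⊤ : SimpleGraph (Fin (p ^ 2))) = 2 * ((p : ℝ) ^ 2 - 1) := by
    rw [graphEnergy_top hcard2, Fintype.card_fin]
    push_cast
    ring
  letI instG : DecidableRel (annGraph (ZMod (p ^ 2))).Adj := Classical.decRel _
  letI instH : DecidableRel (splitG p).Adj := Classical.decRel _
  have hAG := adjMatrix_isHermitian (annGraph (ZMod (p ^ 2)))
  have hAH := adjMatrix_isHermitian (splitG p)
  have hEG : graphEnergy (annGraph (ZMod (p ^ 2))) = ∑ i, |hAG.eigenvalues i| := rfl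
  have hEH : graphEnergy (splitG p) = ∑ i, |hAH.eigenvalues i| := rfl
  have hEHnn : 0 ≤ graphEnergy (splitG p) := by
    rw [hEH]; exact Finset.sum_nonneg fun i _ => abs_nonneg _
  have hTH : (((splitG p).adjMatrix ℝ) * ((splitG p).adjMatrix ℝ)).trace
      = 2 * (p:ℝ) ^ 3 - (p:ℝ) ^ 2 - (p:ℝ) := by
    rw [trace_adj_sq_eq_degree_sum, splitG_degree_sum]
    have h1 : (1:ℕ) ≤ p ^ 2 := by nlinarith
    have h2 : p ≤ p ^ 2 := p_le_sq p
    push_cast [h1, h2]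
    ring
  refine ⟨splitG p, splitG_connected p hp0, splitG_threshold p, ?_, ?_, hTop⟩
  · -- E(Γ) < E(H)
    have hEGnn : 0 ≤ graphEnergy (annGraph (ZMod (p ^ 2))) := by
      rw [hEG]; exact Finset.sum_nonneg fun i _ => abs_nonneg _
    have hG2 : (graphEnergy (annGraph (ZMod (p ^ 2)))) ^ 2 ≤ ((p:ℝ) + 1) * (3 * (p:ℝ) ^ 2) := by
      rw [hEG]
      calc (∑ i, |hAG.eigenvalues i|) ^ 2
          ≤ ((p + 1 : ℕ) : ℝ) * ((((annGraph (ZMod (p ^ 2))).adjMatrix ℝ)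
              * ((annGraph (ZMod (p ^ 2))).adjMatrix ℝ)).trace) :=
            energy_sq_le hAG (p + 1) (ann_rank p)
        _ ≤ ((p:ℝ) + 1) * (3 * (p:ℝ) ^ 2) := by
            rw [trace_adj_sq_eq_degree_sum]
            have hds : ((∑ a, (annGraph (ZMod (p ^ 2))).degree a : ℕ) : ℝ) ≤ 3 * (p:ℝ) ^ 2 := by
              have := ann_degree_sum p
              calc ((∑ a, (annGraph (ZMod (p ^ 2))).degree a : ℕ) : ℝ)
                  ≤ ((3 * p ^ 2 : ℕ) : ℝ) := by exact_mod_cast this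
                _ = 3 * (p:ℝ) ^ 2 := by push_cast; ring
            have hpp : (0:ℝ) ≤ (p:ℝ) + 1 := by positivity
            calc ((p + 1 : ℕ) : ℝ) * _ ≤ ((p + 1 : ℕ) : ℝ) * (3 * (p:ℝ) ^ 2) := by
                  apply mul_le_mul_of_nonneg_left hds (by positivity)
              _ = ((p:ℝ) + 1) * (3 * (p:ℝ) ^ 2) := by push_cast; ring
    have hH2 : 2 * (2 * (p:ℝ) ^ 3 - (p:ℝ) ^ 2 - (p:ℝ)) ≤ (graphEnergy (splitG p)) ^ 2 := by
      rw [hEH, ← hTH]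
      exact energy_sq_ge hAH (SimpleGraph.trace_adjMatrix ℝ _)
    apply lt_of_pow_lt_pow_left₀ 2 hEHnn
    calc (graphEnergy (annGraph (ZMod (p ^ 2)))) ^ 2 ≤ ((p:ℝ) + 1) * (3 * (p:ℝ) ^ 2) := hG2
      _ < 2 * (2 * (p:ℝ) ^ 3 - (p:ℝ) ^ 2 - (p:ℝ)) := by nlinarith
      _ ≤ (graphEnergy (splitG p)) ^ 2 := hH2
  · -- E(H) < E(⊤)
    rw [hTop]
    have h2nn : (0:ℝ) ≤ 2 * ((p:ℝ) ^ 2 - 1) := by nlinarith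
    have hH2' : (graphEnergy (splitG p)) ^ 2
        ≤ ((p:ℝ) + 1) * (2 * (p:ℝ) ^ 3 - (p:ℝ) ^ 2 - (p:ℝ)) := by
      rw [hEH]
      calc (∑ i, |hAH.eigenvalues i|) ^ 2
          ≤ ((p + 1 : ℕ) : ℝ) * ((((splitG p).adjMatrix ℝ) * ((splitG p).adjMatrix ℝ)).trace) :=
            energy_sq_le hAH (p + 1) (splitG_rank p)
        _ = ((p:ℝ) + 1) * (2 * (p:ℝ) ^ 3 - (p:ℝ) ^ 2 - (p:ℝ)) := by
            rw [hTH]; push_cast; ring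
    apply lt_of_pow_lt_pow_left₀ 2 h2nn
    calc (graphEnergy (splitG p)) ^ 2
        ≤ ((p:ℝ) + 1) * (2 * (p:ℝ) ^ 3 - (p:ℝ) ^ 2 - (p:ℝ)) := hH2'
      _ < (2 * ((p:ℝ) ^ 2 - 1)) ^ 2 := by nlinarith
end
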